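/- Under the same hypotheses as Theorem 1 (derivative formula ∂_j ρ(θ) = −(1/2){Φ_θ(G_j), ρ(θ)} + ρ(θ)⟨G_j⟩), the Kubo–Mori information matrix elements of the thermal family satisfy I^{KM}_{ij}(θ) = (1/2)Tr[{G_i, Φ_θ(G_j)} ρ(θ)] − ⟨G_i⟩_{ρ(θ)} ⟨G_j⟩_{ρ(θ)}. -/

import Mathlib

open Matrix

/-- The inverse logarithmic mean kernel. -/
noncomputable def cKM (x y : ℝ) : ℝ :=
  if x = y then 1 / x else (Real.log x - Real.log y) / (x - y)

/-- Kubo--Mori information matrix element, expressed through the eigenvalues `lam`,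
orthonormal eigenvectors `u` of the state, and derivative matrices `d`. -/
noncomputable def kuboMori {ι : Type*} [Fintype ι] {J : ℕ}
    (lam : ι → ℝ) (u : ι → ι → ℂ) (d : Fin J → Matrix ι ι ℂ) (i j : Fin J) : ℂ :=
  ∑ k, ∑ ℓ, (cKM (lam k) (lam ℓ) : ℂ) *
      (star (u k) ⬝ᵥ (d i).mulVec (u ℓ)) * (star (u ℓ) ⬝ᵥ (d j).mulVec (u k))

section aux
variable {n : ℕ}

lemma cKM_symm (x y : ℝ) : cKM x y = cKM y x := by
  unfold cKM
  by_cases h : x = y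
  · simp [h]
  · rw [if_neg h, if_neg (Ne.symm h)]
    rw [div_eq_div_iff (sub_ne_zero.mpr h) (sub_ne_zero.mpr (Ne.symm h))]
    ring

lemma tanh_ratio (a b : ℝ) :
    Real.tanh ((b - a)/2) = (Real.exp (-a) - Real.exp (-b)) / (Real.exp (-a) + Real.exp (-b)) := by
  have e1 : Real.exp (-a) = Real.exp ((b-a)/2) * Real.exp (-(a+b)/2) := by
    rw [← Real.exp_add]; ring_nf
  have e2 : Real.exp (-b) = Real.exp (-((b-a)/2)) * Real.exp (-(a+b)/2) := by
    rw [← Real.exp_add]; ring_nf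
  have hc : Real.exp (-(a+b)/2) ≠ 0 := Real.exp_ne_zero _
  have hd : Real.exp ((b-a)/2) + Real.exp (-((b-a)/2)) ≠ 0 := by positivity
  rw [Real.tanh_eq_sinh_div_cosh, Real.sinh_eq, Real.cosh_eq, e1, e2]
  field_simp

lemma cKM_key (a b Z : ℝ) (hZ : 0 < Z) :
    cKM (Real.exp (-a)/Z) (Real.exp (-b)/Z) * ((Real.exp (-a)/Z + Real.exp (-b)/Z)/2) *
      (if a = b then 1 else Real.tanh ((b - a)/2) / ((b - a)/2)) = 1 := by
  have hZ' : Z ≠ 0 := ne_of_gt hZ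
  have hpa : 0 < Real.exp (-a)/Z := by positivity
  by_cases hab : a = b
  · subst hab
    simp [cKM]
    field_simp
  · have hne : Real.exp (-a)/Z ≠ Real.exp (-b)/Z := by
      intro h
      apply hab
      field_simp at h
      exact neg_injective (Real.exp_injective h)
    have hlog : Real.log (Real.exp (-a)/Z) - Real.log (Real.exp (-b)/Z) = b - a := by
      rw [Real.log_div (Real.exp_ne_zero _) hZ', Real.log_div (Real.exp_ne_zero _) hZ',
        Real.log_exp, Real.log_exp]
      ring
    have hba : b - a ≠ 0 := fun h => hab (by linarith)
    have hsum : Real.exp (-a) + Real.exp (-b) ≠ 0 := by positivity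
    have hdiff : Real.exp (-a) - Real.exp (-b) ≠ 0 := by
      intro h
      apply hab
      have h2 : Real.exp (-a) = Real.exp (-b) := by linarith
      have := Real.exp_injective h2
      linarith
    rw [cKM, if_neg hne, hlog, if_neg hab, tanh_ratio]
    have hdZ : Real.exp (-a)/Z - Real.exp (-b)/Z = (Real.exp (-a) - Real.exp (-b))/Z := by ring
    rw [hdZ]
    field_simp

lemma sum_mul_trace {n : ℕ} (A B : Matrix (Fin n) (Fin n) ℂ) :
    ∑ k, ∑ ℓ, A k ℓ * B ℓ k = (A * B).trace := by
  simp [Matrix.trace, Matrix.diag, Matrix.mul_apply]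

lemma conj_entry (u : Fin n → (Fin n → ℂ)) (M : Matrix (Fin n) (Fin n) ℂ) (k ℓ : Fin n) :
    ((Matrix.of fun m k => u k m)ᴴ * M * (Matrix.of fun m k => u k m)) k ℓ
      = star (u k) ⬝ᵥ M.mulVec (u ℓ) := by
  simp only [Matrix.mul_apply, Matrix.conjTranspose_apply, Matrix.of_apply, dotProduct,
    Matrix.mulVec, Pi.star_apply, Finset.sum_mul, Finset.mul_sum]
  rw [Finset.sum_comm]
  apply Finset.sum_congr rfl
  intro m _
  apply Finset.sum_congr rfl
  intro m' _
  ring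

end aux

/-- Theorem 2: for the thermal family ρ(θ) = e^{−G(θ)}/Z(θ), given the derivative
formula ∂_j ρ = −(1/2){Φ(G_j), ρ} + ρ⟨G_j⟩ and the eigenbasis action of the
belief-propagation map Φ (multiplication by tanh((μ_ℓ−μ_k)/2)/((μ_ℓ−μ_k)/2) on
the (k,ℓ) matrix element), the Kubo--Mori information matrix elements satisfy
I^{KM}_{ij} = (1/2)Tr[{G_i, Φ(G_j)} ρ] − ⟨G_i⟩_ρ ⟨G_j⟩_ρ. -/
theorem kuboMori_thermal {n J : ℕ}
    (G : Fin J → Matrix (Fin n) (Fin n) ℂ) (hG : ∀ j, (G j).IsHermitian)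
    (θ : Fin J → ℝ)
    (Gθ : Matrix (Fin n) (Fin n) ℂ) (hGθ : Gθ = ∑ j, (θ j : ℂ) • G j)
    (μ : Fin n → ℝ) (u : Fin n → (Fin n → ℂ))
    (horth : ∀ k ℓ, star (u k) ⬝ᵥ u ℓ = if k = ℓ then (1 : ℂ) else 0)
    (heigG : ∀ k, Gθ.mulVec (u k) = (μ k : ℂ) • u k)
    (Z : ℝ) (hZ : Z = ∑ k, Real.exp (-μ k))
    (lam : Fin n → ℝ) (hlam : ∀ k, lam k = Real.exp (-μ k) / Z)
    (ρ : Matrix (Fin n) (Fin n) ℂ)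
    (heigρ : ∀ k, ρ.mulVec (u k) = (lam k : ℂ) • u k)
    (hρherm : ρ.IsHermitian)
    (Φ : Matrix (Fin n) (Fin n) ℂ → Matrix (Fin n) (Fin n) ℂ)
    (hΦ : ∀ (X : Matrix (Fin n) (Fin n) ℂ) k ℓ,
      star (u k) ⬝ᵥ (Φ X).mulVec (u ℓ)
        = (if μ k = μ ℓ then (1 : ℂ)
            else ((Real.tanh ((μ ℓ - μ k) / 2) / ((μ ℓ - μ k) / 2) : ℝ) : ℂ)) *
          (star (u k) ⬝ᵥ X.mulVec (u ℓ)))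
    (dρ : Fin J → Matrix (Fin n) (Fin n) ℂ)
    (hdρ : ∀ j, dρ j = -(1 / 2 : ℂ) • (Φ (G j) * ρ + ρ * Φ (G j)) +
        (Matrix.trace (G j * ρ)) • ρ)
    (i j : Fin J) :
    kuboMori lam u dρ i j
      = (1 / 2 : ℂ) * Matrix.trace ((G i * Φ (G j) + Φ (G j) * G i) * ρ) -
          Matrix.trace (G i * ρ) * Matrix.trace (G j * ρ) := by
  classical
  rcases Nat.eq_zero_or_pos n with hn | hn
  · subst hn
    simp [kuboMori, Matrix.trace]
  have hZpos : 0 < Z := by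
    rw [hZ]
    have : Nonempty (Fin n) := ⟨⟨0, hn⟩⟩
    exact Finset.sum_pos (fun k _ => Real.exp_pos _) Finset.univ_nonempty
  -- the unitary change of basis
  set P : Matrix (Fin n) (Fin n) ℂ := Matrix.of (fun m k => u k m) with hP
  have hPHP : Pᴴ * P = 1 := by
    ext k ℓ
    rw [Matrix.mul_apply]
    have := horth k ℓ
    simp only [dotProduct, Pi.star_apply] at this
    simpa [hP, Matrix.conjTranspose_apply, Matrix.one_apply] using this
  have hPPH : P * Pᴴ = 1 := mul_eq_one_comm.mp hPHP
  have he : ∀ (M : Matrix (Fin n) (Fin n) ℂ) k ℓ,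
      (Pᴴ * M * P) k ℓ = star (u k) ⬝ᵥ M.mulVec (u ℓ) := fun M k ℓ => conj_entry u M k ℓ
  have htr : ∀ M : Matrix (Fin n) (Fin n) ℂ, (Pᴴ * M * P).trace = M.trace := by
    intro M
    rw [Matrix.trace_mul_comm, ← Matrix.mul_assoc, hPPH, Matrix.one_mul]
  have hmul : ∀ A B : Matrix (Fin n) (Fin n) ℂ,
      (Pᴴ * A * P) * (Pᴴ * B * P) = Pᴴ * (A * B) * P := by
    intro A B
    have h1 : P * (Pᴴ * (B * P)) = B * P := by rw [← Matrix.mul_assoc, hPPH, Matrix.one_mul]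
    simp only [Matrix.mul_assoc, h1]
  -- diagonalization of ρ
  have hρt : Pᴴ * ρ * P = Matrix.diagonal (fun k => (lam k : ℂ)) := by
    ext k ℓ
    rw [he, heigρ ℓ, Matrix.diagonal_apply]
    rw [dotProduct_smul, horth]
    by_cases h : k = ℓ <;> simp [h]
  -- coefficients of Φ in the eigenbasis
  set f : Fin n → Fin n → ℂ := fun k ℓ =>
    if μ k = μ ℓ then (1 : ℂ)
    else ((Real.tanh ((μ ℓ - μ k) / 2) / ((μ ℓ - μ k) / 2) : ℝ) : ℂ) with hf
  have hΦt : ∀ X (k ℓ : Fin n), (Pᴴ * Φ X * P) k ℓ = f k ℓ * (Pᴴ * X * P) k ℓ := by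
    intro X k ℓ
    rw [he, he, hΦ]
  have hlamne : ∀ k, lam k ≠ 0 := by
    intro k
    rw [hlam k]
    positivity
  -- key scalar identity
  have hkey : ∀ k ℓ, (cKM (lam k) (lam ℓ) : ℂ) * (((lam k : ℂ) + (lam ℓ : ℂ))/2) * f k ℓ = 1 := by
    intro k ℓ
    have hR := cKM_key (μ k) (μ ℓ) Z hZpos
    rw [← hlam k, ← hlam ℓ] at hR
    have hfR : f k ℓ = (((if μ k = μ ℓ then 1 else Real.tanh ((μ ℓ - μ k)/2) / ((μ ℓ - μ k)/2)) : ℝ) : ℂ) := by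
      simp only [hf]
      by_cases hμ : μ k = μ ℓ
      · rw [if_pos hμ, if_pos hμ, Complex.ofReal_one]
      · rw [if_neg hμ, if_neg hμ]
    rw [hfR]
    have : (((lam k : ℂ) + (lam ℓ : ℂ))/2) = (((lam k + lam ℓ)/2 : ℝ) : ℂ) := by push_cast; ring
    rw [this, ← Complex.ofReal_mul, ← Complex.ofReal_mul, hR, Complex.ofReal_one]
  have hkdiag : ∀ k : Fin n, (cKM (lam k) (lam k) : ℂ) * (lam k : ℂ) = 1 := by
    intro k
    unfold cKM
    rw [if_pos rfl]
    have : ((lam k : ℝ) : ℂ) ≠ 0 := by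
      exact_mod_cast Complex.ofReal_ne_zero.mpr (hlamne k)
    field_simp
    rw [← Complex.ofReal_mul, one_div_mul_cancel (hlamne k), Complex.ofReal_one]
  -- entries of the derivative matrices in the eigenbasis
  have hD : ∀ a (k ℓ : Fin n), (Pᴴ * dρ a * P) k ℓ
      = -(((lam k : ℂ) + (lam ℓ : ℂ))/2) * (f k ℓ * (Pᴴ * G a * P) k ℓ)
        + (if k = ℓ then (G a * ρ).trace * (lam k : ℂ) else 0) := by
    intro a k ℓ
    have hexp : Pᴴ * dρ a * P
        = -(1/2 : ℂ) • ((Pᴴ * Φ (G a) * P) * (Pᴴ * ρ * P) + (Pᴴ * ρ * P) * (Pᴴ * Φ (G a) * P))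
          + (G a * ρ).trace • (Pᴴ * ρ * P) := by
      rw [hdρ a, hmul, hmul]
      simp only [Matrix.add_mul, Matrix.mul_add, Matrix.smul_mul, Matrix.mul_smul]
    rw [hexp, hρt]
    by_cases h : k = ℓ
    · subst h
      simp only [Matrix.add_apply, Matrix.smul_apply, Matrix.mul_diagonal,
        Matrix.diagonal_mul, Matrix.diagonal_apply_eq, hΦt, smul_eq_mul, if_pos rfl,
        eq_self_iff_true, if_true]
      ring
    · simp only [Matrix.add_apply, Matrix.smul_apply, Matrix.mul_diagonal,
        Matrix.diagonal_mul, Matrix.diagonal_apply_ne _ h, hΦt, smul_eq_mul, if_neg h]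
      ring
  -- pointwise identity for the summand
  have hpt : ∀ k ℓ, (cKM (lam k) (lam ℓ) : ℂ) * (Pᴴ * dρ i * P) k ℓ * (Pᴴ * dρ j * P) ℓ k
      = (((lam k : ℂ) + (lam ℓ : ℂ))/2) * ((Pᴴ * G i * P) k ℓ * (Pᴴ * Φ (G j) * P) ℓ k)
        + (if k = ℓ then (lam k : ℂ) * ((G i * ρ).trace * (G j * ρ).trace
            - (G j * ρ).trace * (Pᴴ * G i * P) k k - (G i * ρ).trace * (Pᴴ * G j * P) k k)
          else 0) := by
    intro k ℓ
    rw [hD i, hD j]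
    by_cases h : k = ℓ
    · subst h
      rw [if_pos rfl, if_pos rfl, if_pos rfl, hΦt (G j) k k]
      have hfd : f k k = 1 := by simp [hf]
      rw [hfd]
      linear_combination hkdiag k * ((lam k : ℂ) * ((G i * ρ).trace - (Pᴴ * G i * P) k k)
        * ((G j * ρ).trace - (Pᴴ * G j * P) k k))
    · rw [if_neg h, if_neg (fun hh => h hh.symm), if_neg h, hΦt (G j) ℓ k]
      linear_combination hkey k ℓ * ((((lam ℓ : ℂ) + (lam k : ℂ))/2)
        * (f ℓ k * (Pᴴ * G j * P) ℓ k) * (Pᴴ * G i * P) k ℓ)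
  -- summation facts
  have hsum_lam : (∑ k, (lam k : ℂ)) = 1 := by
    have hr : (∑ k, lam k) = 1 := by
      rw [Finset.sum_congr rfl (fun k _ => hlam k), ← Finset.sum_div, ← hZ,
        div_self (ne_of_gt hZpos)]
    calc (∑ k, (lam k : ℂ)) = (((∑ k, lam k) : ℝ) : ℂ) := by push_cast; rfl
      _ = 1 := by rw [hr]; norm_num
  have htrG : ∀ a : Fin J, (∑ k, (lam k : ℂ) * (Pᴴ * G a * P) k k) = (G a * ρ).trace := by
    intro a
    have h1 : (∑ k, (lam k : ℂ) * (Pᴴ * G a * P) k k)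
        = (Matrix.diagonal (fun k => (lam k : ℂ)) * (Pᴴ * G a * P)).trace := by
      simp [Matrix.trace, Matrix.diag, Matrix.diagonal_mul]
    rw [h1, ← hρt, hmul, htr, Matrix.trace_mul_comm]
  have hS1a : (∑ k, ∑ ℓ, (lam k : ℂ) * ((Pᴴ * G i * P) k ℓ * (Pᴴ * Φ (G j) * P) ℓ k))
      = (G i * Φ (G j) * ρ).trace := by
    have h1 : (∑ k, ∑ ℓ, (lam k : ℂ) * ((Pᴴ * G i * P) k ℓ * (Pᴴ * Φ (G j) * P) ℓ k))
        = ∑ k, ∑ ℓ, (Matrix.diagonal (fun k => (lam k : ℂ)) * (Pᴴ * G i * P)) k ℓ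
            * (Pᴴ * Φ (G j) * P) ℓ k := by
      refine Finset.sum_congr rfl fun k _ => Finset.sum_congr rfl fun ℓ _ => ?_
      rw [Matrix.diagonal_mul]
      ring
    rw [h1, sum_mul_trace, ← hρt, hmul, hmul, htr, Matrix.mul_assoc ρ, Matrix.trace_mul_comm]
  have hS1b : (∑ k, ∑ ℓ, (lam ℓ : ℂ) * ((Pᴴ * G i * P) k ℓ * (Pᴴ * Φ (G j) * P) ℓ k))
      = (Φ (G j) * G i * ρ).trace := by
    have h1 : (∑ k, ∑ ℓ, (lam ℓ : ℂ) * ((Pᴴ * G i * P) k ℓ * (Pᴴ * Φ (G j) * P) ℓ k))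
        = ∑ k, ∑ ℓ, (Pᴴ * G i * P) k ℓ
            * ((Matrix.diagonal (fun k => (lam k : ℂ)) * (Pᴴ * Φ (G j) * P)) ℓ k) := by
      refine Finset.sum_congr rfl fun k _ => Finset.sum_congr rfl fun ℓ _ => ?_
      rw [Matrix.diagonal_mul]
      ring
    rw [h1, sum_mul_trace, ← hρt, hmul, hmul, htr, ← Matrix.mul_assoc,
      Matrix.trace_mul_cycle]
  -- assemble
  calc kuboMori lam u dρ i j
      = ∑ k, ∑ ℓ, ((cKM (lam k) (lam ℓ) : ℂ) * (Pᴴ * dρ i * P) k ℓ * (Pᴴ * dρ j * P) ℓ k) := by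
        unfold kuboMori
        refine Finset.sum_congr rfl fun k _ => Finset.sum_congr rfl fun ℓ _ => ?_
        rw [he, he]
    _ = ∑ k, ∑ ℓ, ((((lam k : ℂ) + (lam ℓ : ℂ))/2) * ((Pᴴ * G i * P) k ℓ * (Pᴴ * Φ (G j) * P) ℓ k)
          + (if k = ℓ then (lam k : ℂ) * ((G i * ρ).trace * (G j * ρ).trace
              - (G j * ρ).trace * (Pᴴ * G i * P) k k - (G i * ρ).trace * (Pᴴ * G j * P) k k)
            else 0)) := by
        exact Finset.sum_congr rfl fun k _ => Finset.sum_congr rfl fun ℓ _ => hpt k ℓ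
    _ = (∑ k, ∑ ℓ, (((lam k : ℂ) + (lam ℓ : ℂ))/2) * ((Pᴴ * G i * P) k ℓ * (Pᴴ * Φ (G j) * P) ℓ k))
          + ∑ k, (lam k : ℂ) * ((G i * ρ).trace * (G j * ρ).trace
              - (G j * ρ).trace * (Pᴴ * G i * P) k k - (G i * ρ).trace * (Pᴴ * G j * P) k k) := by
        simp only [Finset.sum_add_distrib]
        congr 1
        exact Finset.sum_congr rfl fun k _ => by simp
    _ = ((1/2 : ℂ) * (G i * Φ (G j) * ρ).trace + (1/2 : ℂ) * (Φ (G j) * G i * ρ).trace)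
          - (G i * ρ).trace * (G j * ρ).trace := by
        have hsplit : (∑ k, ∑ ℓ, (((lam k : ℂ) + (lam ℓ : ℂ))/2)
              * ((Pᴴ * G i * P) k ℓ * (Pᴴ * Φ (G j) * P) ℓ k))
            = (1/2 : ℂ) * (G i * Φ (G j) * ρ).trace + (1/2 : ℂ) * (Φ (G j) * G i * ρ).trace := by
          rw [← hS1a, ← hS1b, Finset.mul_sum, Finset.mul_sum, ← Finset.sum_add_distrib]
          refine Finset.sum_congr rfl fun k _ => ?_
          rw [Finset.mul_sum, Finset.mul_sum, ← Finset.sum_add_distrib]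
          refine Finset.sum_congr rfl fun ℓ _ => ?_
          ring
        have hsnd : (∑ k, (lam k : ℂ) * ((G i * ρ).trace * (G j * ρ).trace
              - (G j * ρ).trace * (Pᴴ * G i * P) k k - (G i * ρ).trace * (Pᴴ * G j * P) k k))
            = - ((G i * ρ).trace * (G j * ρ).trace) := by
          have expand : (∑ k, (lam k : ℂ) * ((G i * ρ).trace * (G j * ρ).trace
                - (G j * ρ).trace * (Pᴴ * G i * P) k k - (G i * ρ).trace * (Pᴴ * G j * P) k k))
              = (G i * ρ).trace * (G j * ρ).trace * (∑ k, (lam k : ℂ))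
                - (G j * ρ).trace * (∑ k, (lam k : ℂ) * (Pᴴ * G i * P) k k)
                - (G i * ρ).trace * (∑ k, (lam k : ℂ) * (Pᴴ * G j * P) k k) := by
            rw [Finset.mul_sum, Finset.mul_sum, Finset.mul_sum, ← Finset.sum_sub_distrib,
              ← Finset.sum_sub_distrib]
            exact Finset.sum_congr rfl fun k _ => by ring
          rw [expand, hsum_lam, htrG i, htrG j]
          ring
        rw [hsplit, hsnd]
        ring
    _ = (1 / 2 : ℂ) * Matrix.trace ((G i * Φ (G j) + Φ (G j) * G i) * ρ) -
          Matrix.trace (G i * ρ) * Matrix.trace (G j * ρ) := by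
        rw [Matrix.add_mul, Matrix.trace_add]
        ring
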